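/- Let A₁ = {0,1}, A₂ = {0,2,4}, A₃ = {0,2} and let L ≥ 1 be an integer. For mᵢ = (m_{i,1},…,m_{i,L}) with m_{i,ℓ} ∈ Aᵢ, set xᵢ = Σ_{ℓ=1}^L m_{i,ℓ}·8^{ℓ−1}. Then: (a) if (m₁,m₂,m₃) and (m₁',m₂',m₃') satisfy x₁+x₂+x₃ = x₁'+x₂'+x₃', then m₁ = m₁'; (b) if they satisfy 2x₂+x₃ = 2x₂'+x₃', then m₂ = m₂'; and (c) x₃ determines m₃. In particular, the map (m₁,m₂,m₃) ↦ (x₁+x₂+x₃, 2x₂+x₃, x₃) is injective on A₁^L × A₂^L × A₃^L. -/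

import Mathlib

namespace GIFC

/-- The multi-level (base `8`) encoding `x = ∑_{ℓ} m_ℓ 8^ℓ` of a vector of
per-level messages `m : Fin L → ℕ`. -/
def levelEnc {L : ℕ} (m : Fin L → ℕ) : ℕ := ∑ ℓ, m ℓ * 8 ^ (ℓ : ℕ)

lemma levelEnc_succ {L : ℕ} (a : Fin (L + 1) → ℕ) :
    levelEnc a = a 0 + 8 * levelEnc (fun ℓ : Fin L => a ℓ.succ) := by
  simp only [levelEnc, Fin.sum_univ_succ, Fin.val_zero, pow_zero, mul_one,
    Finset.mul_sum, Fin.val_succ, pow_succ]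
  congr 1
  exact Finset.sum_congr rfl fun x _ => by ring

lemma digits_unique : ∀ {L : ℕ} (a b : Fin L → ℕ), (∀ ℓ, a ℓ < 8) →
    (∀ ℓ, b ℓ < 8) → levelEnc a = levelEnc b → a = b := by
  intro L
  induction L with
  | zero => intro a b _ _ _; funext ℓ; exact ℓ.elim0
  | succ n ih =>
    intro a b ha hb h
    rw [levelEnc_succ a, levelEnc_succ b] at h
    have ha0 := ha 0
    have hb0 := hb 0
    have h0 : a 0 = b 0 ∧
        levelEnc (fun ℓ : Fin n => a ℓ.succ) = levelEnc (fun ℓ : Fin n => b ℓ.succ) := by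
      constructor <;> [skip; skip] <;> omega
    have htail := ih (fun ℓ => a ℓ.succ) (fun ℓ => b ℓ.succ)
      (fun ℓ => ha ℓ.succ) (fun ℓ => hb ℓ.succ) h0.2
    funext ℓ
    refine Fin.cases h0.1 (fun i => ?_) ℓ
    exact congrFun htail i

lemma levelEnc_add {L : ℕ} (a b : Fin L → ℕ) :
    levelEnc (fun ℓ => a ℓ + b ℓ) = levelEnc a + levelEnc b := by
  simp [levelEnc, add_mul, Finset.sum_add_distrib]

theorem multilevel_scheme_decodable (L : ℕ) (hL : 1 ≤ L)
    (m m' : Fin 3 → Fin L → ℕ)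
    (h1 : ∀ ℓ, m 0 ℓ ∈ ({0, 1} : Set ℕ))
    (h2 : ∀ ℓ, m 1 ℓ ∈ ({0, 2, 4} : Set ℕ))
    (h3 : ∀ ℓ, m 2 ℓ ∈ ({0, 2} : Set ℕ))
    (h1' : ∀ ℓ, m' 0 ℓ ∈ ({0, 1} : Set ℕ))
    (h2' : ∀ ℓ, m' 1 ℓ ∈ ({0, 2, 4} : Set ℕ))
    (h3' : ∀ ℓ, m' 2 ℓ ∈ ({0, 2} : Set ℕ)) :
    (levelEnc (m 0) + levelEnc (m 1) + levelEnc (m 2) =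
        levelEnc (m' 0) + levelEnc (m' 1) + levelEnc (m' 2) → m 0 = m' 0) ∧
    (2 * levelEnc (m 1) + levelEnc (m 2) =
        2 * levelEnc (m' 1) + levelEnc (m' 2) → m 1 = m' 1) ∧
    (levelEnc (m 2) = levelEnc (m' 2) → m 2 = m' 2) ∧
    ((levelEnc (m 0) + levelEnc (m 1) + levelEnc (m 2),
        2 * levelEnc (m 1) + levelEnc (m 2), levelEnc (m 2)) =
      (levelEnc (m' 0) + levelEnc (m' 1) + levelEnc (m' 2),
        2 * levelEnc (m' 1) + levelEnc (m' 2), levelEnc (m' 2)) → m = m') := by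
  simp only [Set.mem_insert_iff, Set.mem_singleton_iff] at h1 h2 h3 h1' h2' h3'
  -- (a)
  have parta : levelEnc (m 0) + levelEnc (m 1) + levelEnc (m 2) =
      levelEnc (m' 0) + levelEnc (m' 1) + levelEnc (m' 2) → m 0 = m' 0 := by
    intro h
    have hsum : levelEnc (fun ℓ => m 0 ℓ + m 1 ℓ + m 2 ℓ) =
        levelEnc (fun ℓ => m' 0 ℓ + m' 1 ℓ + m' 2 ℓ) := by
      have e1 : (fun ℓ => m 0 ℓ + m 1 ℓ + m 2 ℓ) =
          (fun ℓ => (m 0 ℓ + m 1 ℓ) + m 2 ℓ) := rfl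
      rw [e1, levelEnc_add, levelEnc_add (m 0) (m 1)]
      have e2 : (fun ℓ => m' 0 ℓ + m' 1 ℓ + m' 2 ℓ) =
          (fun ℓ => (m' 0 ℓ + m' 1 ℓ) + m' 2 ℓ) := rfl
      rw [e2, levelEnc_add, levelEnc_add (m' 0) (m' 1), h]
    have := digits_unique _ _
      (fun ℓ => by have := h1 ℓ; have := h2 ℓ; have := h3 ℓ; omega)
      (fun ℓ => by have := h1' ℓ; have := h2' ℓ; have := h3' ℓ; omega) hsum
    funext ℓ
    have := congrFun this ℓ
    have := h1 ℓ; have := h2 ℓ; have := h3 ℓ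
    have := h1' ℓ; have := h2' ℓ; have := h3' ℓ
    omega
  -- (b)
  have partb : 2 * levelEnc (m 1) + levelEnc (m 2) =
      2 * levelEnc (m' 1) + levelEnc (m' 2) → m 1 = m' 1 := by
    intro h
    have key : ∀ (a b : Fin L → ℕ), (∀ ℓ, a ℓ = 0 ∨ a ℓ = 2 ∨ a ℓ = 4) →
        (∀ ℓ, b ℓ = 0 ∨ b ℓ = 2) →
        2 * levelEnc a + levelEnc b = 2 * levelEnc (fun ℓ => a ℓ + b ℓ / 2) := by
      intro a b ha hb
      have : (fun ℓ => a ℓ + b ℓ / 2) = fun ℓ => a ℓ + b ℓ / 2 := rfl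
      rw [levelEnc_add]
      have hb2 : levelEnc b = 2 * levelEnc (fun ℓ => b ℓ / 2) := by
        simp only [levelEnc, Finset.mul_sum]
        refine Finset.sum_congr rfl fun ℓ _ => ?_
        have := hb ℓ
        rcases this with h | h <;> rw [h] <;> ring
      rw [hb2]; ring
    have hsum : levelEnc (fun ℓ => m 1 ℓ + m 2 ℓ / 2) =
        levelEnc (fun ℓ => m' 1 ℓ + m' 2 ℓ / 2) := by
      have e1 := key (m 1) (m 2) h2 h3
      have e2 := key (m' 1) (m' 2) h2' h3'
      omega
    have := digits_unique _ _
      (fun ℓ => by have := h2 ℓ; have := h3 ℓ; omega)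
      (fun ℓ => by have := h2' ℓ; have := h3' ℓ; omega) hsum
    funext ℓ
    have := congrFun this ℓ
    have := h2 ℓ; have := h3 ℓ; have := h2' ℓ; have := h3' ℓ
    omega
  -- (c)
  have partc : levelEnc (m 2) = levelEnc (m' 2) → m 2 = m' 2 :=
    fun h => digits_unique _ _ (fun ℓ => by have := h3 ℓ; omega)
      (fun ℓ => by have := h3' ℓ; omega) h
  refine ⟨parta, partb, partc, fun h => ?_⟩
  rw [Prod.mk.injEq, Prod.mk.injEq] at h
  obtain ⟨ha, hb, hc⟩ := h
  have e1 := parta ha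
  have e2 := partb hb
  have e3 := partc hc
  funext i
  fin_cases i <;> assumption

end GIFC
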